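/- For every real κ > 0, the piecewise function f : ℝ → ℝ defined by f(ξ) = ξ − 1 if 1 − ξ < −κ, f(ξ) = −(3/κ⁴)(1−ξ)⁵ − (8/κ³)(1−ξ)⁴ − (6/κ²)(1−ξ)³ if −κ ≤ 1 − ξ < 0, and f(ξ) = 0 if 1 − ξ ≥ 0, satisfies: f is monotone nondecreasing, 0 ≤ f(ξ) ≤ max(ξ − 1, 0) for all ξ ∈ ℝ, and f is Lipschitz continuous with constant 2. -/

import Mathlib

/-- The explicit quintic `C²` regularization of the cutoff `ξ ↦ (ξ − 1)⁺`. -/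
noncomputable def fkappa (κ : ℝ) (ξ : ℝ) : ℝ :=
  if 1 - ξ < -κ then ξ - 1
  else if 1 - ξ < 0 then
    -(3/κ^4) * (1 - ξ)^5 - (8/κ^3) * (1 - ξ)^4 - (6/κ^2) * (1 - ξ)^3
  else 0

/-- auxiliary quintic -/
noncomputable def gq (u : ℝ) : ℝ := 3*u^5 - 8*u^4 + 6*u^3

lemma gq_hasDeriv (u : ℝ) : HasDerivAt gq (15*u^4 - 32*u^3 + 18*u^2) u := by
  have h := (((hasDerivAt_pow 5 u).const_mul 3).sub ((hasDerivAt_pow 4 u).const_mul 8)).add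
    ((hasDerivAt_pow 3 u).const_mul 6)
  have : HasDerivAt (fun x : ℝ => 3*x^5 - 8*x^4 + 6*x^3) (15*u^4 - 32*u^3 + 18*u^2) u := by
    exact h.congr_deriv (by push_cast; ring)
  exact this

lemma gq_cont : Continuous gq := by
  unfold gq; continuity

lemma gq_mono : Monotone gq := by
  apply monotone_of_deriv_nonneg
  · exact fun u => (gq_hasDeriv u).differentiableAt
  · intro u
    rw [(gq_hasDeriv u).deriv]
    nlinarith [sq_nonneg (u^2 - 16/15*u), sq_nonneg u]

lemma gq_aux_mono : MonotoneOn (fun u => 2*u - gq u) (Set.Icc (0:ℝ) 1) := by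
  apply monotoneOn_of_deriv_nonneg (convex_Icc 0 1)
  · exact (Continuous.sub (by continuity) gq_cont).continuousOn
  · intro u hu
    have h2 : HasDerivAt (fun u : ℝ => 2*u) 2 u := by simpa using (hasDerivAt_id u).const_mul 2
    exact (h2.sub (gq_hasDeriv u)).differentiableAt.differentiableWithinAt
  · intro u hu
    rw [interior_Icc] at hu
    have h2 : HasDerivAt (fun u : ℝ => 2*u) 2 u := by simpa using (hasDerivAt_id u).const_mul 2
    have hd : HasDerivAt (fun u => 2*u - gq u) (2 - (15*u^4 - 32*u^3 + 18*u^2)) u := h2.sub (gq_hasDeriv u)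
    rw [hd.deriv]
    obtain ⟨h0, h1⟩ := hu
    nlinarith [sq_nonneg (u - 3/5), mul_pos h0 (sub_pos.2 h1), sq_nonneg (u*(1-u)), sq_nonneg u, mul_nonneg (mul_nonneg h0.le h0.le) (sub_pos.2 h1).le]

lemma gq_le (u : ℝ) (h0 : 0 ≤ u) (h1 : u ≤ 1) : gq u ≤ u := by
  nlinarith [mul_nonneg (mul_nonneg h0 (pow_nonneg (sub_nonneg.2 h1) 3)) (by linarith : (0:ℝ) ≤ 3*u+1), (by unfold gq; ring : u - gq u = u * (1-u)^3 * (3*u+1))]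

lemma gq_zero : gq 0 = 0 := by simp [gq]
lemma gq_one : gq 1 = 1 := by norm_num [gq]

/-- normalized profile -/
noncomputable def Gq (u : ℝ) : ℝ := if 1 < u then u else if 0 < u then gq u else 0

lemma gq_nonneg (u : ℝ) (h0 : 0 ≤ u) : 0 ≤ gq u := by
  have := gq_mono h0; rwa [gq_zero] at this

lemma gq_aux (s t : ℝ) (h0 : 0 ≤ s) (hst : s ≤ t) (h1 : t ≤ 1) :
    2*s - gq s ≤ 2*t - gq t :=
  gq_aux_mono ⟨h0, hst.trans h1⟩ ⟨h0.trans hst, h1⟩ hst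

lemma Gq_hi {u : ℝ} (h : 1 < u) : Gq u = u := if_pos h
lemma Gq_mid {u : ℝ} (h0 : 0 < u) (h1 : u ≤ 1) : Gq u = gq u := by
  rw [Gq, if_neg (not_lt.2 h1), if_pos h0]
lemma Gq_lo {u : ℝ} (h : u ≤ 0) : Gq u = 0 := by
  rw [Gq, if_neg (by linarith), if_neg (not_lt.2 h)]

/-- the two-point inequality for `Gq` -/
lemma Gq_two_point (s t : ℝ) (hst : s ≤ t) :
    Gq s ≤ Gq t ∧ Gq t - Gq s ≤ 2*(t-s) := by
  rcases lt_or_ge 1 s with hs1 | hs1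
  · rw [Gq_hi hs1, Gq_hi (lt_of_lt_of_le hs1 hst)]
    constructor <;> linarith
  rcases lt_or_ge 0 s with hs0 | hs0
  · rw [Gq_mid hs0 hs1]
    rcases lt_or_ge 1 t with ht1 | ht1
    · rw [Gq_hi ht1]
      have hg1 : gq s ≤ s := gq_le s hs0.le hs1
      have haux : 2*s - gq s ≤ 2*1 - gq 1 := gq_aux s 1 hs0.le hs1 le_rfl
      rw [gq_one] at haux
      constructor <;> linarith
    · rw [Gq_mid (lt_of_lt_of_le hs0 hst) ht1]
      have := gq_mono hst
      have haux := gq_aux s t hs0.le hst ht1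
      constructor <;> linarith
  · rw [Gq_lo hs0]
    rcases lt_or_ge 1 t with ht1 | ht1
    · rw [Gq_hi ht1]; constructor <;> linarith
    rcases lt_or_ge 0 t with ht0 | ht0
    · rw [Gq_mid ht0 ht1]
      have hg0 : 0 ≤ gq t := gq_nonneg t ht0.le
      have haux : 2*0 - gq 0 ≤ 2*t - gq t := gq_aux 0 t le_rfl ht0.le ht1
      rw [gq_zero] at haux
      constructor <;> linarith
    · rw [Gq_lo ht0]; constructor <;> linarith

lemma Gq_bounds (u : ℝ) : 0 ≤ Gq u ∧ Gq u ≤ max u 0 := by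
  rcases lt_or_ge 1 u with h1 | h1
  · rw [Gq_hi h1]; exact ⟨by linarith, le_max_left _ _⟩
  rcases lt_or_ge 0 u with h0 | h0
  · rw [Gq_mid h0 h1]
    exact ⟨gq_nonneg u h0.le, le_trans (gq_le u h0.le h1) (le_max_left _ _)⟩
  · rw [Gq_lo h0]; exact ⟨le_rfl, le_max_right _ _⟩

lemma fkappa_eq (κ : ℝ) (hκ : 0 < κ) (ξ : ℝ) :
    fkappa κ ξ = κ * Gq ((ξ - 1)/κ) := by
  have hκ' : κ ≠ 0 := hκ.ne'
  by_cases h1 : 1 - ξ < -κ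
  · have hu : 1 < (ξ-1)/κ := by rw [lt_div_iff₀ hκ]; linarith
    rw [fkappa, if_pos h1, Gq_hi hu]
    field_simp
  by_cases h2 : 1 - ξ < 0
  · have hu0 : 0 < (ξ-1)/κ := div_pos (by linarith) hκ
    have hu1 : (ξ-1)/κ ≤ 1 := by rw [div_le_one hκ]; push_neg at h1; linarith
    rw [fkappa, if_neg h1, if_pos h2, Gq_mid hu0 hu1]
    unfold gq
    field_simp
    ring
  · have hu : (ξ-1)/κ ≤ 0 := by
      apply div_nonpos_of_nonpos_of_nonneg _ hκ.le
      push_neg at h2; linarith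
    rw [fkappa, if_neg h1, if_neg h2, Gq_lo hu, mul_zero]

/-- for every `κ > 0`, the quintic regularization is monotone
nondecreasing, satisfies `0 ≤ f(ξ) ≤ max(ξ − 1, 0)`, and is Lipschitz with
constant 2. -/
theorem fkappa_properties (κ : ℝ) (hκ : 0 < κ) :
    Monotone (fkappa κ) ∧
    (∀ ξ : ℝ, 0 ≤ fkappa κ ξ ∧ fkappa κ ξ ≤ max (ξ - 1) 0) ∧
    LipschitzWith 2 (fkappa κ) := by
  have hκ' : κ ≠ 0 := hκ.ne'
  have key : ∀ x y : ℝ, x ≤ y →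
      fkappa κ x ≤ fkappa κ y ∧ fkappa κ y - fkappa κ x ≤ 2*(y-x) := by
    intro x y hxy
    rw [fkappa_eq κ hκ x, fkappa_eq κ hκ y]
    have hdiv : (x-1)/κ ≤ (y-1)/κ := by gcongr
    obtain ⟨hm, hl⟩ := Gq_two_point _ _ hdiv
    constructor
    · exact mul_le_mul_of_nonneg_left hm hκ.le
    · have : κ * Gq ((y-1)/κ) - κ * Gq ((x-1)/κ) = κ * (Gq ((y-1)/κ) - Gq ((x-1)/κ)) := by ring
      rw [this]
      calc κ * (Gq ((y-1)/κ) - Gq ((x-1)/κ)) ≤ κ * (2*((y-1)/κ - (x-1)/κ)) :=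
            mul_le_mul_of_nonneg_left hl hκ.le
        _ = 2*(y-x) := by field_simp; ring
  refine ⟨fun x y hxy => (key x y hxy).1, ?_, ?_⟩
  · intro ξ
    rw [fkappa_eq κ hκ ξ]
    obtain ⟨h0, h1⟩ := Gq_bounds ((ξ-1)/κ)
    refine ⟨mul_nonneg hκ.le h0, ?_⟩
    calc κ * Gq ((ξ-1)/κ) ≤ κ * max ((ξ-1)/κ) 0 := mul_le_mul_of_nonneg_left h1 hκ.le
      _ = max (ξ-1) 0 := by
          rcases le_total (ξ-1) 0 with h | h
          · rw [max_eq_right h, max_eq_right, mul_zero]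
            exact div_nonpos_of_nonpos_of_nonneg h hκ.le
          · rw [max_eq_left h, max_eq_left, mul_div_cancel₀ _ hκ']
            exact div_nonneg h hκ.le
  · apply LipschitzWith.of_dist_le_mul
    intro x y
    rw [Real.dist_eq, Real.dist_eq]
    rcases le_total x y with h | h
    · obtain ⟨hm, hl⟩ := key x y h
      rw [abs_sub_comm, abs_of_nonneg (by linarith), abs_of_nonpos (by linarith)]
      push_cast; linarith
    · obtain ⟨hm, hl⟩ := key y x h
      rw [abs_of_nonneg (by linarith), abs_of_nonneg (by linarith)]
      push_cast; linarith
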